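/- Let N ≥ W > L > 0 with 2L ≤ N, and let M = ⌈(N+W−1)/L⌉. There exists a nonzero polynomial P in the 2(N+W) real variables given by the real and imaginary parts of the entries of (x,w) ∈ ℂ^N × ℂ^W such that: for every pair (x,w) with P(x,w) ≠ 0 and every (x',w') ∈ ℂ^N × ℂ^W satisfying ŷ'[k,m] = ŷ[k,m] for all m = 0,…,M−1 and all k = 0,…,2L−1, there exist nonzero complex numbers λ = (λ_0,…,λ_{L−1}) with (x',w') = λ∘(x,w). That is, 2L Fourier measurements per window suffice to determine a generic pair (x,w) modulo the scaling ambiguities. -/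

import Mathlib

open Complex BigOperators

/-- Extension of a finite vector `w ∈ ℂ^W` to `ℤ` by zero outside `{0,…,W−1}`. -/
noncomputable def zext {W : ℕ} (w : Fin W → ℂ) (j : ℤ) : ℂ :=
  if h : 0 ≤ j ∧ j < (W : ℤ) then w ⟨j.toNat, by omega⟩ else 0

/-- The blind short-time Fourier transform
`ŷ[k,m] = Σ_{n=0}^{N−1} x[n]·w[mL−n]·e^{−2πikn/N}`. -/
noncomputable def stft {N W : ℕ} (x : Fin N → ℂ) (w : Fin W → ℂ)
    (L : ℕ) (k : ℤ) (m : ℕ) : ℂ :=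
  ∑ n : Fin N, x n * zext w ((m : ℤ) * L - (n : ℕ)) *
    Complex.exp (-(2 * (Real.pi : ℂ) * Complex.I * (k : ℂ) * ((n : ℕ) : ℂ)) / (N : ℂ))

lemma zext_nat {W : ℕ} (w : Fin W → ℂ) (j : ℕ) (h : j < W) :
    zext w (j : ℤ) = w ⟨j, h⟩ := by
  simp [zext, h]

lemma zext_of_ge {W : ℕ} (w : Fin W → ℂ) (j : ℤ) (h : (W : ℤ) ≤ j) :
    zext w j = 0 := by
  unfold zext; rw [dif_neg (by omega)]

lemma zext_of_neg {W : ℕ} (w : Fin W → ℂ) (j : ℤ) (h : j < 0) :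
    zext w j = 0 := by
  unfold zext; rw [dif_neg (by omega)]

section nodes
variable (N : ℕ)

noncomputable def zeta (N : ℕ) : ℂ := Complex.exp (-(2 * (Real.pi:ℂ) * Complex.I) / N)

lemma zeta_prim (hN : N ≠ 0) : IsPrimitiveRoot (zeta N) N := by
  have h := Complex.isPrimitiveRoot_exp N hN
  have : zeta N = (Complex.exp (2 * Real.pi * Complex.I / N))⁻¹ := by
    rw [← Complex.exp_neg]
    unfold zeta
    ring_nf
  rw [this]
  exact h.inv

lemma zeta_pow_inj (hN : N ≠ 0) {a b : ℕ} (ha : a < N) (hb : b < N)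
    (h : zeta N ^ a = zeta N ^ b) : a = b :=
  (zeta_prim N hN).pow_inj ha hb h

lemma exp_eq_zeta_pow (k n : ℕ) :
    Complex.exp (-(2 * (Real.pi : ℂ) * Complex.I * (k : ℂ) * (n : ℂ)) / (N : ℂ))
      = (zeta N ^ n) ^ k := by
  rw [← pow_mul]
  unfold zeta
  rw [← Complex.exp_nat_mul]
  congr 1
  push_cast
  ring

end nodes

lemma cast_helper (m L n j : ℕ) (h : m * L = n + j) :
    (m : ℤ) * (L : ℤ) - ((n : ℕ) : ℤ) = (j : ℤ) := by omega
open Complex Polynomial Finset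

/-- Vandermonde kernel lemma. -/
lemma vand_kernel {ι : Type*} [DecidableEq ι] (s : Finset ι) (z : ι → ℂ)
    (hinj : Set.InjOn z s) (v : ι → ℂ) (d : ℕ) (hcard : s.card ≤ d)
    (hsum : ∀ k < d, ∑ n ∈ s, v n * z n ^ k = 0) :
    ∀ n ∈ s, v n = 0 := by
  intro n0 hn0
  set g : Polynomial ℂ := ∏ n ∈ s.erase n0, (X - C (z n)) with hg
  have hdeg : g.natDegree < d := by
    have h1 : g.natDegree = (s.erase n0).card := by
      rw [hg, natDegree_prod_of_monic]
      · simp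
      · intro i _; exact monic_X_sub_C _
    have := Finset.card_erase_lt_of_mem hn0
    omega
  have key : ∑ n ∈ s, v n * g.eval (z n) = 0 := by
    have : ∀ n ∈ s, v n * g.eval (z n)
        = ∑ k ∈ Finset.range d, g.coeff k * (v n * z n ^ k) := by
      intro n _
      rw [Polynomial.eval_eq_sum_range' hdeg, Finset.mul_sum]
      exact Finset.sum_congr rfl fun k _ => by ring
    rw [Finset.sum_congr rfl this, Finset.sum_comm]
    apply Finset.sum_eq_zero
    intro k hk
    rw [← Finset.mul_sum, hsum k (Finset.mem_range.mp hk), mul_zero]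
  have hzero : ∀ n ∈ s, n ≠ n0 → v n * g.eval (z n) = 0 := by
    intro n hn hne
    have : g.eval (z n) = 0 := by
      rw [hg, eval_prod]
      apply Finset.prod_eq_zero (Finset.mem_erase.mpr ⟨hne, hn⟩)
      simp
    rw [this, mul_zero]
  have := Finset.sum_eq_single_of_mem n0 hn0 hzero ▸ key
  have hgn0 : g.eval (z n0) ≠ 0 := by
    rw [hg, eval_prod]
    apply Finset.prod_ne_zero_iff.mpr
    intro i hi
    simp only [eval_sub, eval_X, eval_C, sub_ne_zero]
    intro h
    exact (Finset.mem_erase.mp hi).1 (hinj (Finset.mem_erase.mp hi).2 hn0 h.symm)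
  exact (mul_eq_zero.mp this).resolve_right hgn0


lemma window_recovery {N W L : ℕ} (hL : 0 < L) (hLW : L < W) (hWN : W ≤ N)
    (h2L : 2 * L ≤ N)
    (x x' : Fin N → ℂ) (w w' : Fin W → ℂ)
    (hx : ∀ n, x n ≠ 0) (hw : ∀ j, w j ≠ 0)
    (hmeas : ∀ m < (N + W - 1 + L - 1) / L, ∀ k < 2 * L,
      stft x' w' L (k : ℤ) m = stft x w L (k : ℤ) m) :
    ∀ m < (N + W - 1 + L - 1) / L, ∀ n : Fin N,
      x' n * zext w' ((m : ℤ) * L - (n : ℕ)) = x n * zext w ((m : ℤ) * L - (n : ℕ)) := by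
  have hN : N ≠ 0 := by omega
  intro m
  induction m using Nat.strong_induction_on with
  | _ m IH =>
  intro hm
  set v : Fin N → ℂ := fun n =>
    x' n * zext w' ((m : ℤ) * L - (n : ℕ)) - x n * zext w ((m : ℤ) * L - (n : ℕ)) with hv
  suffices h : ∀ n : Fin N, v n = 0 by
    intro n
    have := h n
    rw [hv] at this
    exact sub_eq_zero.mp this
  classical
  set p : Fin N → Prop := fun n => (n : ℕ) < L ∨ (m * L < (n : ℕ) + L ∧ (n : ℕ) ≤ m * L)
    with hp
  set s : Finset (Fin N) := Finset.univ.filter p with hs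
  -- vanishing off s
  have hvanish : ∀ n : Fin N, ¬ p n → v n = 0 := by
    intro n hn
    simp only [hp] at hn
    push_neg at hn
    obtain ⟨hnL, hn2⟩ := hn
    rcases Nat.lt_or_ge (m * L) (n : ℕ) with hcase | hcase
    · have h1 : (m : ℤ) * L - ((n : ℕ) : ℤ) < 0 := by omega
      simp only [hv, zext_of_neg _ _ h1, mul_zero, sub_zero]
    · have hnmL : (n : ℕ) + L ≤ m * L := by
        rcases Nat.lt_or_ge (m * L) ((n : ℕ) + L) with h' | h'
        · exact absurd (hn2 h') (by omega)
        · omega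
      set j : ℕ := m * L - (n : ℕ) with hj
      have hidx : (m : ℤ) * L - ((n : ℕ) : ℤ) = (j : ℤ) :=
        cast_helper m L (n : ℕ) j (by omega)
      rcases Nat.lt_or_ge j W with hjW | hjW
      · -- the hard case: use IH at m-1, m-2
        have hjL : L ≤ j := by omega
        have hm2 : 2 ≤ m := Nat.le_of_mul_le_mul_right (by omega) hL
        have q1 : (m - 1) * L = m * L - L := by rw [Nat.sub_mul, one_mul]
        have q2 : (m - 2) * L = m * L - 2 * L := Nat.sub_mul m 2 L
        set nL : Fin N := ⟨(n : ℕ) - L, by omega⟩ with hnL'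
        have e1 := IH (m - 1) (by omega) (by omega) n
        have e2 := IH (m - 1) (by omega) (by omega) nL
        have e3 := IH (m - 2) (by omega) (by omega) nL
        have i1 : ((m - 1 : ℕ) : ℤ) * L - ((n : ℕ) : ℤ) = ((j - L : ℕ) : ℤ) :=
          cast_helper (m - 1) L (n : ℕ) (j - L) (by rw [q1]; omega)
        have i2 : ((m - 1 : ℕ) : ℤ) * L - ((nL : ℕ) : ℤ) = (j : ℤ) := by
          simp only [hnL']
          exact cast_helper (m - 1) L ((n : ℕ) - L) j (by rw [q1]; omega)
        have i3 : ((m - 2 : ℕ) : ℤ) * L - ((nL : ℕ) : ℤ) = ((j - L : ℕ) : ℤ) := by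
          simp only [hnL']
          exact cast_helper (m - 2) L ((n : ℕ) - L) (j - L) (by rw [q2]; omega)
        have hjLW : j - L < W := by omega
        rw [i1, zext_nat _ _ hjLW, zext_nat _ _ hjLW] at e1
        rw [i2, zext_nat _ _ hjW, zext_nat _ _ hjW] at e2
        rw [i3, zext_nat _ _ hjLW, zext_nat _ _ hjLW] at e3
        have hne : x nL * w ⟨j - L, hjLW⟩ ≠ 0 := mul_ne_zero (hx _) (hw _)
        have key : x' n * w' ⟨j, hjW⟩ = x n * w ⟨j, hjW⟩ := by
          have hmul : (x' n * w' ⟨j, hjW⟩) * (x' nL * w' ⟨j - L, hjLW⟩)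
              = (x n * w ⟨j, hjW⟩) * (x nL * w ⟨j - L, hjLW⟩) := by
            calc (x' n * w' ⟨j, hjW⟩) * (x' nL * w' ⟨j - L, hjLW⟩)
                = (x' n * w' ⟨j - L, hjLW⟩) * (x' nL * w' ⟨j, hjW⟩) := by ring
              _ = (x n * w ⟨j - L, hjLW⟩) * (x nL * w ⟨j, hjW⟩) := by rw [e1, e2]
              _ = (x n * w ⟨j, hjW⟩) * (x nL * w ⟨j - L, hjLW⟩) := by ring
          rw [e3] at hmul
          exact mul_right_cancel₀ hne hmul
        simp only [hv, hidx, zext_nat _ _ hjW, key, sub_self]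
      · have : (W : ℤ) ≤ (j : ℤ) := by omega
        simp only [hv, hidx, zext_of_ge _ _ this, mul_zero, sub_zero]
  -- cardinality bound
  have hcard : s.card ≤ 2 * L := by
    have hsub : s ⊆ Finset.univ.filter (fun n : Fin N => (n : ℕ) < L)
        ∪ Finset.univ.filter (fun n : Fin N => m * L < (n : ℕ) + L ∧ (n : ℕ) ≤ m * L) := by
      intro n hn
      rw [hs, Finset.mem_filter] at hn
      rcases hn.2 with h | h
      · exact Finset.mem_union_left _ (Finset.mem_filter.mpr ⟨Finset.mem_univ _, h⟩)
      · exact Finset.mem_union_right _ (Finset.mem_filter.mpr ⟨Finset.mem_univ _, h⟩)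
    have c1 : (Finset.univ.filter (fun n : Fin N => (n : ℕ) < L)).card ≤ L := by
      have := Finset.card_le_card_of_injOn (fun n : Fin N => (n : ℕ))
        (s := Finset.univ.filter (fun n : Fin N => (n : ℕ) < L))
        (t := Finset.range L)
        (fun n hn => by
          show (n : ℕ) ∈ Finset.range L
          exact Finset.mem_range.mpr (Finset.mem_filter.mp hn).2)
        (fun a _ b _ h => Fin.ext h)
      simpa using this
    have c2 : (Finset.univ.filter
        (fun n : Fin N => m * L < (n : ℕ) + L ∧ (n : ℕ) ≤ m * L)).card ≤ L := by
      have := Finset.card_le_card_of_injOn (fun n : Fin N => (n : ℕ) + L)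
        (s := Finset.univ.filter (fun n : Fin N => m * L < (n : ℕ) + L ∧ (n : ℕ) ≤ m * L))
        (t := Finset.Ioc (m * L) (m * L + L))
        (fun n hn => by
          have h := (Finset.mem_filter.mp hn).2
          show (n : ℕ) + L ∈ Finset.Ioc (m * L) (m * L + L)
          exact Finset.mem_Ioc.mpr ⟨h.1, by omega⟩)
        (fun a _ b _ h => by
          have h' : (a : ℕ) + L = (b : ℕ) + L := h
          exact Fin.ext (by omega))
      rw [Nat.card_Ioc] at this
      omega
    calc s.card ≤ _ := Finset.card_le_card hsub
      _ ≤ L + L := le_trans (Finset.card_union_le _ _) (by omega)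
      _ = 2 * L := by ring
  -- sum condition
  have hsum : ∀ k < 2 * L, ∑ n ∈ s, v n * (zeta N ^ (n : ℕ)) ^ k = 0 := by
    intro k hk
    have hext : ∑ n ∈ s, v n * (zeta N ^ (n : ℕ)) ^ k
        = ∑ n : Fin N, v n * (zeta N ^ (n : ℕ)) ^ k := by
      apply Finset.sum_subset (Finset.subset_univ s)
      intro n _ hns
      have : ¬ p n := fun hpn => hns (Finset.mem_filter.mpr ⟨Finset.mem_univ _, hpn⟩)
      rw [hvanish n this, zero_mul]
    have hstft : ∑ n : Fin N, v n * (zeta N ^ (n : ℕ)) ^ k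
        = stft x' w' L (k : ℤ) m - stft x w L (k : ℤ) m := by
      unfold stft
      rw [← Finset.sum_sub_distrib]
      apply Finset.sum_congr rfl
      intro n _
      have hterm : Complex.exp (-(2 * (Real.pi : ℂ) * Complex.I * (((k : ℤ)) : ℂ)
          * ((n : ℕ) : ℂ)) / (N : ℂ)) = (zeta N ^ (n : ℕ)) ^ k := by
        rw [show ((((k : ℤ)) : ℂ)) = ((k : ℕ) : ℂ) by push_cast; ring]
        exact exp_eq_zeta_pow N k (n : ℕ)
      rw [hterm]
      simp only [hv]
      ring
    rw [hext, hstft, hmeas m hm k hk, sub_self]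
  -- apply Vandermonde
  have hinj : Set.InjOn (fun n : Fin N => zeta N ^ (n : ℕ)) s := by
    intro a _ b _ h
    exact Fin.ext (zeta_pow_inj N hN a.isLt b.isLt h)
  have hker := vand_kernel s (fun n : Fin N => zeta N ^ (n : ℕ)) hinj v (2 * L) hcard hsum
  intro n
  by_cases hns : n ∈ s
  · exact hker n hns
  · exact hvanish n (fun hpn => hns (Finset.mem_filter.mpr ⟨Finset.mem_univ _, hpn⟩))

/-- The `2(N+W)` real variables of a pair `(x,w) ∈ ℂ^N × ℂ^W`:
real and imaginary parts of all the entries. -/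
noncomputable def realVars {N W : ℕ} (x : Fin N → ℂ) (w : Fin W → ℂ) :
    (Fin N ⊕ Fin W) × Bool → ℝ
  | (Sum.inl n, false) => (x n).re
  | (Sum.inl n, true) => (x n).im
  | (Sum.inr n, false) => (w n).re
  | (Sum.inr n, true) => (w n).im

/-- `2L` Fourier measurements per window (frequencies
`k = 0,…,2L−1`) suffice to determine a generic pair `(x,w)` modulo
the scaling ambiguities. -/
theorem blind_stft_uniqueness_twoL_per_window
    {N W L : ℕ} (hL : 0 < L) (hLW : L < W) (hWN : W ≤ N) (h2L : 2 * L ≤ N) :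
    ∃ P : MvPolynomial ((Fin N ⊕ Fin W) × Bool) ℝ,
      P ≠ 0 ∧
      ∀ (x : Fin N → ℂ) (w : Fin W → ℂ),
        MvPolynomial.eval (realVars x w) P ≠ 0 →
        ∀ (x' : Fin N → ℂ) (w' : Fin W → ℂ),
          (∀ m : Fin ((N + W - 1 + L - 1) / L), ∀ k : ℕ, k < 2 * L →
            stft x' w' L (k : ℤ) (m : ℕ) = stft x w L (k : ℤ) (m : ℕ)) →
          ∃ lam : Fin L → ℂ, (∀ j, lam j ≠ 0) ∧
            (∀ n : Fin N, x' n = lam ⟨(n : ℕ) % L, Nat.mod_lt _ hL⟩ * x n) ∧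
            (∀ n : Fin W, w' n = (lam ⟨(L - (n : ℕ) % L) % L, Nat.mod_lt _ hL⟩)⁻¹ * w n) := by
  classical
  have hLN : L < N := lt_of_lt_of_le hLW hWN
  refine ⟨∏ i : Fin N ⊕ Fin W, (MvPolynomial.X (i, false) ^ 2 + MvPolynomial.X (i, true) ^ 2),
    ?_, ?_⟩
  · intro hP0
    have h1 := congrArg
      (MvPolynomial.eval (realVars (fun _ : Fin N => (1:ℂ)) (fun _ : Fin W => (1:ℂ)))) hP0
    rw [map_zero, map_prod] at h1
    have h2 : ∀ i ∈ (Finset.univ : Finset (Fin N ⊕ Fin W)),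
        MvPolynomial.eval (realVars (fun _ : Fin N => (1:ℂ)) (fun _ : Fin W => (1:ℂ)))
          (MvPolynomial.X (i, false) ^ 2 + MvPolynomial.X (i, true) ^ 2) = 1 := by
      intro i _
      rcases i with n | n <;> simp [realVars]
    rw [Finset.prod_congr rfl h2, Finset.prod_const_one] at h1
    exact one_ne_zero h1
  · intro x w hP x' w' hmeas
    have hfac : ∀ i : Fin N ⊕ Fin W,
        (realVars x w (i, false)) ^ 2 + (realVars x w (i, true)) ^ 2 ≠ 0 := by
      intro i h0
      apply hP
      rw [map_prod]
      refine Finset.prod_eq_zero (Finset.mem_univ i) ?_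
      simp only [map_add, map_pow, MvPolynomial.eval_X]
      exact h0
    have hx : ∀ n, x n ≠ 0 := by
      intro n h0
      apply hfac (Sum.inl n)
      show (x n).re ^ 2 + (x n).im ^ 2 = 0
      rw [h0]; norm_num
    have hw : ∀ j, w j ≠ 0 := by
      intro j h0
      apply hfac (Sum.inr j)
      show (w j).re ^ 2 + (w j).im ^ 2 = 0
      rw [h0]; norm_num
    set M := (N + W - 1 + L - 1) / L with hM
    have hMge : N + W - 1 ≤ M * L := by
      have h1 : L * M + (N + W - 1 + L - 1) % L = N + W - 1 + L - 1 := by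
        rw [hM]; exact Nat.div_add_mod _ _
      have h2 : (N + W - 1 + L - 1) % L < L := Nat.mod_lt _ hL
      have h3 : M * L = L * M := Nat.mul_comm M L
      omega
    have hE := window_recovery hL hLW hWN h2L x x' w w' hx hw
      (fun m hm k hk => hmeas ⟨m, hm⟩ k hk)
    have pair : ∀ (n j : ℕ) (hn : n < N) (hj : j < W), (n + j) % L = 0 →
        x' ⟨n, hn⟩ * w' ⟨j, hj⟩ = x ⟨n, hn⟩ * w ⟨j, hj⟩ := by
      intro n j hn hj hmod
      have hdvd : L ∣ (n + j) := Nat.dvd_of_mod_eq_zero hmod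
      set m := (n + j) / L with hm'
      have hml : m * L = n + j := Nat.div_mul_cancel hdvd
      have hmM : m < M := by
        have h1 : m * L < M * L := by omega
        exact lt_of_mul_lt_mul_right h1 (Nat.zero_le L)
      have h := hE m hmM ⟨n, hn⟩
      rw [show (m : ℤ) * L - (((⟨n, hn⟩ : Fin N) : ℕ) : ℤ) = ((j : ℕ) : ℤ) from
        cast_helper m L n j hml] at h
      rw [zext_nat _ _ hj, zext_nat _ _ hj] at h
      exact h
    have compl_mod : ∀ t : ℕ, (t + (L - t % L) % L) % L = 0 := by
      intro t
      rcases Nat.eq_zero_or_pos (t % L) with h | h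
      · rw [h, Nat.sub_zero, Nat.mod_self, Nat.add_zero]; exact h
      · have hmod : t % L < L := Nat.mod_lt _ hL
        have hlt : L - t % L < L := by omega
        rw [Nat.mod_eq_of_lt hlt, Nat.add_mod]
        have h3 : t % L + (L - t % L) % L = L := by
          rw [Nat.mod_eq_of_lt hlt]; omega
        rw [h3, Nat.mod_self]
    have compl_compl : ∀ t : ℕ, (L - ((L - t % L) % L) % L) % L = t % L := by
      intro t
      rcases Nat.eq_zero_or_pos (t % L) with h | h
      · rw [h, Nat.sub_zero, Nat.mod_self, Nat.zero_mod, Nat.sub_zero, Nat.mod_self]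
      · have hmod : t % L < L := Nat.mod_lt _ hL
        have hlt : L - t % L < L := by omega
        rw [Nat.mod_eq_of_lt hlt, Nat.mod_eq_of_lt hlt]
        have h3 : L - (L - t % L) = t % L := by omega
        rw [h3]
        exact Nat.mod_eq_of_lt hmod
    set lam : Fin L → ℂ := fun jl =>
      x' ⟨(jl : ℕ), lt_trans jl.isLt hLN⟩ / x ⟨(jl : ℕ), lt_trans jl.isLt hLN⟩ with hlam
    have hx'ne : ∀ t (ht : t < N), x' ⟨t, ht⟩ ≠ 0 := by
      intro t ht h0
      have hj0W : (L - t % L) % L < W := lt_trans (Nat.mod_lt _ hL) hLW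
      have hp := pair t ((L - t % L) % L) ht hj0W (compl_mod t)
      rw [h0, zero_mul] at hp
      exact (mul_ne_zero (hx _) (hw _)) hp.symm
    have hlamne : ∀ jl : Fin L, lam jl ≠ 0 := fun jl => div_ne_zero (hx'ne _ _) (hx _)
    have hbase : ∀ t (ht0 : t < L) (ht : t < N),
        x' ⟨t, ht⟩ = lam ⟨t, ht0⟩ * x ⟨t, ht⟩ := by
      intro t ht0 ht
      simp only [hlam]
      rw [div_mul_cancel₀ _ (hx _)]
    have hwc : ∀ j (hj : j < W),
        w' ⟨j, hj⟩ = (lam ⟨(L - j % L) % L, Nat.mod_lt _ hL⟩)⁻¹ * w ⟨j, hj⟩ := by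
      intro j hj
      have hn0L : (L - j % L) % L < L := Nat.mod_lt _ hL
      have hn0N : (L - j % L) % L < N := lt_trans hn0L hLN
      have hp := pair ((L - j % L) % L) j hn0N hj (by rw [Nat.add_comm]; exact compl_mod j)
      rw [hbase _ hn0L hn0N] at hp
      have hl := hlamne ⟨(L - j % L) % L, hn0L⟩
      have h2 : lam ⟨(L - j % L) % L, hn0L⟩ * w' ⟨j, hj⟩ = w ⟨j, hj⟩ :=
        mul_left_cancel₀ (hx ⟨(L - j % L) % L, hn0N⟩) (by linear_combination hp)
      rw [← h2, inv_mul_cancel_left₀ hl]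
    have hxc : ∀ t (ht : t < N),
        x' ⟨t, ht⟩ = lam ⟨t % L, Nat.mod_lt _ hL⟩ * x ⟨t, ht⟩ := by
      intro t ht
      have hj0L : (L - t % L) % L < L := Nat.mod_lt _ hL
      have hj0W : (L - t % L) % L < W := lt_trans hj0L hLW
      have hp := pair t ((L - t % L) % L) ht hj0W (compl_mod t)
      rw [hwc _ hj0W] at hp
      have hidx : (⟨(L - ((L - t % L) % L) % L) % L, Nat.mod_lt _ hL⟩ : Fin L)
          = ⟨t % L, Nat.mod_lt _ hL⟩ := Fin.ext (compl_compl t)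
      rw [hidx] at hp
      have hl := hlamne ⟨t % L, Nat.mod_lt _ hL⟩
      have hwne := hw ⟨(L - t % L) % L, hj0W⟩
      have h2 : x' ⟨t, ht⟩ * (lam ⟨t % L, Nat.mod_lt _ hL⟩)⁻¹ = x ⟨t, ht⟩ :=
        mul_right_cancel₀ hwne (by linear_combination hp)
      rw [← h2]
      field_simp
    refine ⟨lam, hlamne, ?_, ?_⟩
    · intro n
      have := hxc (n : ℕ) n.isLt
      simpa using this
    · intro n
      have := hwc (n : ℕ) n.isLt
      simpa using this
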